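/- Let p be an odd prime, 0 ≤ r ≤ p−1, and ρ = Sym^{2r}(F̄_p²)⊗det^{−r} the representation of PGL₂(F_p). With X the averaging operator over the split torus H and Y the averaging operator over the nonsplit torus K = ⟨[[1,α],[1,1]]⟩ (of order p+1), and with v_H = x^r y^r, v_K = (αx²−y²)^r, write Xv_K = s·v_H and Yv_H = t·v_K. Then st = (−1)^{(p−1)/2}·C(r, r/2)·C(p−1−r, (p−1−r)/2) in F_p if r is even, and st = 0 if r is odd. -/

import Mathlib

open MvPolynomial Matrix

/-- The action of a `2 × 2` matrix `g` on homogeneous polynomials of degree `2r` in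
`x = X 0`, `y = X 1` defining the representation `Sym^{2r}(F̄_p²) ⊗ det^{-r}`:
`(ρ(g)·f)(x, y) = f(ax + cy, bx + dy) · det(g)^{-r}` for `g = [[a,b],[c,d]]`. -/
noncomputable def symDetAct (p r : ℕ) [Fact p.Prime]
    (g : Matrix (Fin 2) (Fin 2) (AlgebraicClosure (ZMod p)))
    (P : MvPolynomial (Fin 2) (AlgebraicClosure (ZMod p))) :
    MvPolynomial (Fin 2) (AlgebraicClosure (ZMod p)) :=
  C ((g.det) ^ r)⁻¹ *
    MvPolynomial.bind₁
      ![C (g 0 0) * X 0 + C (g 1 0) * X 1, C (g 0 1) * X 0 + C (g 1 1) * X 1] P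

private lemma stmt19_coeff_aux {F : Type*} [Field F] (b : F) (r : ℕ) :
    ((Polynomial.C b * Polynomial.X ^ 2 - 1) ^ r).coeff r =
      if Even r then (r.choose (r / 2) : F) * b ^ (r / 2) * (-1) ^ (r / 2) else 0 := by
  have h : (Polynomial.C b * Polynomial.X ^ 2 - 1 : Polynomial F)
      = Polynomial.C b * Polynomial.X ^ 2 + Polynomial.C (-1) := by
    simp [sub_eq_add_neg]
  rw [h, add_pow, Polynomial.finset_sum_coeff]
  have hterm : ∀ k, (Polynomial.C b * Polynomial.X ^ 2) ^ k * Polynomial.C (-1 : F) ^ (r - k)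
      * (r.choose k : Polynomial F) = Polynomial.C (b ^ k * (-1) ^ (r - k) * (r.choose k : F))
        * Polynomial.X ^ (2 * k) := by
    intro k
    rw [mul_pow, ← Polynomial.C_pow, ← Polynomial.C_pow, ← Polynomial.C_eq_natCast, ← pow_mul,
      _root_.map_mul, _root_.map_mul]
    ring
  simp only [hterm, Polynomial.coeff_C_mul, Polynomial.coeff_X_pow]
  by_cases hre : Even r
  · obtain ⟨m, hm⟩ := hre
    have hm2 : r = 2 * m := by omega
    rw [if_pos ⟨m, hm⟩, Finset.sum_eq_single m]
    · rw [if_pos hm2, mul_one, show r / 2 = m by omega, show r - m = m by omega]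
      ring
    · intro k _ hk
      rw [if_neg (by omega), mul_zero]
    · intro hmem
      exact absurd (Finset.mem_range.mpr (by omega)) hmem
  · rw [if_neg hre]
    apply Finset.sum_eq_zero
    intro k _
    rw [if_neg (by rintro h'; exact hre ⟨k, by omega⟩), mul_zero]

private lemma stmt19_sum_pow_zmod (p : ℕ) [Fact p.Prime] (i : ℕ) :
    ∑ x : ZMod p, x ^ i = if i ≠ 0 ∧ (p - 1) ∣ i then -1 else 0 := by
  classical
  by_cases hi : i = 0
  · subst hi
    simp [ZMod.natCast_self p, Finset.card_univ, ZMod.card]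
  · simp only [Ne, hi, not_false_iff, true_and]
    let φ : (ZMod p)ˣ ↪ ZMod p := ⟨fun x ↦ x, Units.val_injective⟩
    have huniv : Finset.univ.map φ = Finset.univ \ {0} := by
      ext x
      simp only [Finset.mem_map, Finset.mem_univ, Function.Embedding.coeFn_mk, true_and,
        Finset.mem_sdiff, Finset.mem_singleton, φ]; exact isUnit_iff_ne_zero
    have h1 : ∑ x : ZMod p, x ^ i = ∑ x ∈ Finset.univ \ {(0 : ZMod p)}, x ^ i := by
      rw [← Finset.sum_sdiff (Finset.subset_univ {0}), Finset.sum_singleton, zero_pow hi,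
        add_zero]
    have h2 := FiniteField.sum_pow_units (ZMod p) i
    rw [ZMod.card] at h2
    rw [h1, ← huniv, Finset.sum_map, ← h2]
    rfl

private lemma stmt19_alpha_pow (p : ℕ) [Fact p.Prime] (hodd : Odd p) (α : (ZMod p)ˣ)
    (hα : ∀ x : ZMod p, x ^ 2 ≠ (α : ZMod p)) :
    (α : ZMod p) ^ ((p - 1) / 2) = -1 := by
  obtain ⟨c, hc⟩ := hodd
  have hp2 : 2 ≤ p := (Fact.out : p.Prime).two_le
  have hne : (α : ZMod p) ≠ 0 := α.ne_zero
  have hsq : ¬ IsSquare (α : ZMod p) := by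
    rintro ⟨y, hy⟩
    exact hα y (by rw [sq]; exact hy.symm)
  have hec := (ZMod.euler_criterion p hne).not.mp hsq
  have hx2 : ((α : ZMod p) ^ (p / 2)) * ((α : ZMod p) ^ (p / 2)) = 1 := by
    rw [← pow_add, show p / 2 + p / 2 = p - 1 by omega]
    exact ZMod.pow_card_sub_one_eq_one hne
  rcases mul_self_eq_one_iff.mp hx2 with h | h
  · exact absurd h hec
  · rw [show (p - 1) / 2 = p / 2 by omega]
    exact h

private lemma stmt19_sum_S (p : ℕ) [Fact p.Prime] (hodd : Odd p) (r : ℕ) (hre : Even r)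
    (hr : r ≤ p - 1) (α : (ZMod p)ˣ) (hα : ∀ x : ZMod p, x ^ 2 ≠ (α : ZMod p)) :
    (if r = 0 then (1 : ZMod p) else 0) +
      ∑ z : ZMod p, z ^ r * (((1 : ZMod p) - (α : ZMod p) * z * z) ^ r)⁻¹ =
    -(((p - 1 - r).choose ((p - 1 - r) / 2) : ZMod p) *
      (-(α : ZMod p)) ^ ((p - 1 - r) / 2)) := by
  obtain ⟨c, hc⟩ := hodd
  have hp3 : 3 ≤ p := by
    have h2 := (Fact.out : p.Prime).two_le
    omega
  set n := p - 1 - r with hn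
  have hz : ∀ z : ZMod p, (1 : ZMod p) - (α : ZMod p) * z * z ≠ 0 := by
    intro z heq
    have hz0 : z ≠ 0 := by rintro rfl; simp at heq
    apply hα z⁻¹
    have h1 : (α : ZMod p) * z * z = 1 := by linear_combination -heq
    calc (z⁻¹) ^ 2 = (z⁻¹) ^ 2 * ((α : ZMod p) * z * z) := by rw [h1, mul_one]
      _ = (α : ZMod p) * (z⁻¹ * z) ^ 2 := by ring
      _ = (α : ZMod p) := by rw [inv_mul_cancel₀ hz0, one_pow, mul_one]
  have hinv : ∀ z : ZMod p, (((1 : ZMod p) - (α : ZMod p) * z * z) ^ r)⁻¹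
      = ((1 : ZMod p) - (α : ZMod p) * z * z) ^ n := by
    intro z
    refine inv_eq_of_mul_eq_one_right ?_
    rw [← pow_add, show r + n = p - 1 by omega]
    exact ZMod.pow_card_sub_one_eq_one (hz z)
  simp only [hinv]
  have hrw : ∀ z : ZMod p, ((1 : ZMod p) - (α : ZMod p) * z * z) ^ n
      = ∑ m ∈ Finset.range (n + 1), ((-(α : ZMod p)) * z ^ 2) ^ m * (n.choose m : ZMod p) := by
    intro z
    rw [show (1 : ZMod p) - (α : ZMod p) * z * z = (-(α : ZMod p)) * z ^ 2 + 1 by ring,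
      add_pow]
    simp
  simp only [hrw]
  have hswap : ∀ z : ZMod p, z ^ r * ∑ m ∈ Finset.range (n + 1),
      ((-(α : ZMod p)) * z ^ 2) ^ m * (n.choose m : ZMod p)
      = ∑ m ∈ Finset.range (n + 1), (n.choose m : ZMod p) * (-(α : ZMod p)) ^ m * z ^ (r + 2 * m) := by
    intro z
    rw [Finset.mul_sum]
    refine Finset.sum_congr rfl fun m _ => ?_
    rw [mul_pow, ← pow_mul, pow_add]
    ring
  simp only [hswap]
  rw [Finset.sum_comm]
  simp only [← Finset.mul_sum, stmt19_sum_pow_zmod p]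
  obtain ⟨r', hr'⟩ := hre
  have key : ∀ m ∈ Finset.range (n + 1),
      ((n.choose m : ZMod p) * (-(α : ZMod p)) ^ m *
        (if r + 2 * m ≠ 0 ∧ (p - 1) ∣ r + 2 * m then (-1 : ZMod p) else 0))
      = (if m = n / 2 then -((n.choose m : ZMod p) * (-(α : ZMod p)) ^ m) else 0) +
        (if r = 0 ∧ m = n then -((n.choose m : ZMod p) * (-(α : ZMod p)) ^ m) else 0) := by
    intro m hm
    rw [Finset.mem_range] at hm
    by_cases h1 : m = n / 2
    · have hc1 : r + 2 * m = p - 1 := by omega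
      rw [if_pos ⟨by omega, ⟨1, by omega⟩⟩, if_pos h1, if_neg, add_zero, mul_neg_one]
      rintro ⟨h0, hmn⟩
      omega
    · by_cases h2 : r = 0 ∧ m = n
      · obtain ⟨h0, hmn⟩ := h2
        rw [if_pos ⟨by omega, ⟨2, by omega⟩⟩, if_neg h1, if_pos ⟨h0, hmn⟩, zero_add,
          mul_neg_one]
      · rw [if_neg, if_neg h1, if_neg h2, add_zero, mul_zero]
        rintro ⟨hne, d, hd⟩
        have hd2 : d ≤ 2 := by
          by_contra hgt
          have h3 : (p - 1) * 3 ≤ (p - 1) * d := Nat.mul_le_mul_left _ (by omega)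
          omega
        interval_cases d
        · omega
        · exact h1 (by omega)
        · exact h2 ⟨by omega, by omega⟩
  rw [Finset.sum_congr rfl key, Finset.sum_add_distrib, Finset.sum_ite_eq' (Finset.range (n + 1)),
    if_pos (Finset.mem_range.mpr (by omega))]
  by_cases hr0 : r = 0
  · have hna : (-(α : ZMod p)) ^ (p - 1) = 1 :=
      ZMod.pow_card_sub_one_eq_one (neg_ne_zero.mpr α.ne_zero)
    have hsimp : ∀ m, (r = 0 ∧ m = n) ↔ (m = n) := fun m => by simp [hr0]
    simp only [hsimp]
    rw [Finset.sum_ite_eq' (Finset.range (n + 1)), if_pos (Finset.mem_range.mpr (by omega)),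
      if_pos hr0, Nat.choose_self, Nat.cast_one, one_mul, show n = p - 1 by omega, hna]
    ring
  · rw [if_neg hr0, Finset.sum_eq_zero fun m _ => if_neg (fun h => hr0 h.1), add_zero,
      zero_add]
/-- Let `p` be an odd prime, `0 ≤ r ≤ p - 1`, and `ρ = Sym^{2r}(F̄_p²) ⊗ det^{-r}` the
mod-`p` representation of `PGL₂(F_p)`, with `α ∈ F_p^×` a non-square such that
`k_α = [[1,α],[1,1]]` has order `p + 1` in `PGL₂(F_p)`, so that the non-split torus
`K = ⟨k_α⟩` consists of the classes of `[[1,αz],[z,1]]` (`z ∈ F_p`) and `[[0,α],[1,0]]`.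
Let `X` (resp. `Y`) be the averaging operator over the split torus `H` (resp. over `K`),
`v_H = x^r y^r`, `v_K = (αx² - y²)^r`, and define `s, t` by `X v_K = s v_H`,
`Y v_H = t v_K`. Then `s t = (-1)^{(p-1)/2} C(r, r/2) C(p-1-r, (p-1-r)/2)` in `F_p` if
`r` is even, and `s t = 0` if `r` is odd. -/
theorem stmt_19 (p : ℕ) [Fact p.Prime] (hodd : Odd p) (r : ℕ) (hr : r ≤ p - 1)
    (α : (ZMod p)ˣ) (hα : ∀ x : ZMod p, x ^ 2 ≠ (α : ZMod p))
    (k : GL (Fin 2) (ZMod p))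
    (hk : (k : Matrix (Fin 2) (Fin 2) (ZMod p)) = !![1, (α : ZMod p); 1, 1])
    (hord : orderOf
        (QuotientGroup.mk k :
          GL (Fin 2) (ZMod p) ⧸ Subgroup.center (GL (Fin 2) (ZMod p))) = p + 1)
    (s t : AlgebraicClosure (ZMod p))
    (hs : C (((p : AlgebraicClosure (ZMod p)) - 1))⁻¹ *
        ∑ a : (ZMod p)ˣ,
          symDetAct p r
            !![algebraMap (ZMod p) (AlgebraicClosure (ZMod p)) (a : ZMod p), 0; 0, 1]
            ((C (algebraMap (ZMod p) (AlgebraicClosure (ZMod p)) (α : ZMod p)) * X 0 ^ 2 -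
                X 1 ^ 2) ^ r) =
      C s * (X 0 ^ r * X 1 ^ r))
    (ht : C (((p : AlgebraicClosure (ZMod p)) + 1))⁻¹ *
        (symDetAct p r
            !![0, algebraMap (ZMod p) (AlgebraicClosure (ZMod p)) (α : ZMod p); 1, 0]
            (X 0 ^ r * X 1 ^ r) +
          ∑ z : ZMod p,
            symDetAct p r
              !![1, algebraMap (ZMod p) (AlgebraicClosure (ZMod p)) ((α : ZMod p) * z);
                algebraMap (ZMod p) (AlgebraicClosure (ZMod p)) z, 1]
              (X 0 ^ r * X 1 ^ r)) =
      C t * ((C (algebraMap (ZMod p) (AlgebraicClosure (ZMod p)) (α : ZMod p)) * X 0 ^ 2 -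
          X 1 ^ 2) ^ r)) :
    s * t =
      if Even r then
        (-1 : AlgebraicClosure (ZMod p)) ^ ((p - 1) / 2) *
          (Nat.choose r (r / 2) : AlgebraicClosure (ZMod p)) *
          (Nat.choose (p - 1 - r) ((p - 1 - r) / 2) : AlgebraicClosure (ZMod p))
      else 0 := by

  set φ := algebraMap (ZMod p) (AlgebraicClosure (ZMod p)) with hφ
  have hchar : (p : (AlgebraicClosure (ZMod p))) = 0 := by
    have h0 : (p : ZMod p) = 0 := ZMod.natCast_self p
    rw [show ((p : ℕ) : (AlgebraicClosure (ZMod p))) = φ (p : ZMod p) from by push_cast [hφ]; rfl, h0, map_zero]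
  -- Step 1: compute s from hs by extracting the coefficient of X^r after
  -- specializing (x, y) ↦ (X, 1).
  have hs' : s = if Even r then
      (r.choose (r / 2) : (AlgebraicClosure (ZMod p))) * (φ (α : ZMod p)) ^ (r / 2) * (-1) ^ (r / 2) else 0 := by
    have hs2 := congrArg (MvPolynomial.aeval (R := (AlgebraicClosure (ZMod p))) ![Polynomial.X, (1 : Polynomial (AlgebraicClosure (ZMod p)))]) hs
    simp only [symDetAct, _root_.map_mul, map_sum, map_pow, map_sub, map_add, aeval_C, aeval_X,
      aeval_bind₁, Matrix.det_fin_two_of, Matrix.cons_val', Matrix.cons_val_zero,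
      Matrix.cons_val_one, Matrix.head_cons, Matrix.head_fin_const, Matrix.cons_val_fin_one,
      Matrix.of_apply, Fin.isValue, Polynomial.algebraMap_eq, map_zero, _root_.map_one, mul_one,
      one_pow, zero_mul, add_zero, zero_add, sub_zero, mul_zero] at hs2
    have hs3 := congrArg (fun q : Polynomial (AlgebraicClosure (ZMod p)) => q.coeff r) hs2
    simp only [Polynomial.coeff_C_mul, Polynomial.finset_sum_coeff] at hs3
    have hform : ∀ x : (ZMod p)ˣ,
        (Polynomial.C (φ ↑α) * (Polynomial.C (φ ↑x) * Polynomial.X) ^ 2 - 1)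
          = Polynomial.C (φ ↑α * φ ↑x ^ 2) * Polynomial.X ^ 2 - 1 := by
      intro x
      simp only [_root_.map_mul, map_pow]
      ring
    simp only [hform, stmt19_coeff_aux, Polynomial.coeff_X_pow_self, mul_one] at hs3
    have hcard : ((Fintype.card (ZMod p)ˣ : ℕ) : (AlgebraicClosure (ZMod p))) = -1 := by
      rw [ZMod.card_units p, Nat.cast_sub (Fact.out : p.Prime).one_lt.le, hchar, Nat.cast_one,
        zero_sub]
    by_cases hre : Even r
    · simp only [hre, if_true] at hs3
      rw [if_pos hre]
      have hterm : ∀ x : (ZMod p)ˣ,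
          (φ ↑x ^ r)⁻¹ * ((r.choose (r / 2) : (AlgebraicClosure (ZMod p))) * (φ ↑α * φ ↑x ^ 2) ^ (r / 2) * (-1) ^ (r / 2))
            = (r.choose (r / 2) : (AlgebraicClosure (ZMod p))) * φ ↑α ^ (r / 2) * (-1) ^ (r / 2) := by
        intro x
        have hx : φ (x : ZMod p) ≠ 0 := by
          rw [map_ne_zero_iff _ (RingHom.injective φ)]
          exact x.ne_zero
        have h1 : (φ ↑x ^ r)⁻¹ * φ ↑x ^ r = 1 := inv_mul_cancel₀ (pow_ne_zero r hx)
        rw [mul_pow, ← pow_mul, show 2 * (r / 2) = r from by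
          rw [mul_comm]; exact Nat.div_two_mul_two_of_even hre]
        linear_combination ((r.choose (r / 2) : (AlgebraicClosure (ZMod p))) * φ ↑α ^ (r / 2) * (-1) ^ (r / 2)) * h1
      rw [Finset.sum_congr rfl fun x _ => hterm x, Finset.sum_const, Finset.card_univ,
        nsmul_eq_mul, hcard, hchar, zero_sub] at hs3
      rw [← hs3]
      ring_nf
    · simp only [hre, if_false] at hs3
      rw [if_neg hre]
      simp only [mul_zero, Finset.sum_const_zero] at hs3
      linear_combination -hs3
  by_cases hre : Even r
  swap
  · rw [if_neg hre, hs', if_neg hre, zero_mul]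
  -- Step 2: compute t from ht by evaluating at (x, y) = (0, 1).
  have ht' : t * (-1 : (AlgebraicClosure (ZMod p))) ^ r = (if r = 0 then 1 else 0) +
      φ (∑ z : ZMod p, z ^ r * (((1 : ZMod p) - (α : ZMod p) * z * z) ^ r)⁻¹) := by
    have ht2 := congrArg (MvPolynomial.aeval (R := (AlgebraicClosure (ZMod p))) ![(0 : (AlgebraicClosure (ZMod p))), 1]) ht
    simp only [symDetAct, _root_.map_mul, map_sum, map_pow, map_sub, map_add, aeval_C, aeval_X,
      aeval_bind₁, Matrix.det_fin_two_of, Matrix.cons_val', Matrix.cons_val_zero,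
      Matrix.cons_val_one, Matrix.head_cons, Matrix.head_fin_const, Matrix.cons_val_fin_one,
      Matrix.of_apply, Fin.isValue, map_zero, _root_.map_one, mul_one, one_pow, zero_mul,
      mul_zero, add_zero, zero_add, sub_zero, zero_sub, one_mul,
      Algebra.algebraMap_self_apply] at ht2
    rw [show ((0 : (AlgebraicClosure (ZMod p))) ^ 2) = 0 from by norm_num, mul_zero, zero_sub] at ht2
    have hone : ((p : (AlgebraicClosure (ZMod p))) + 1)⁻¹ = 1 := by rw [hchar, zero_add, inv_one]
    rw [hone, one_mul] at ht2
    have hfirst : ((-φ ↑α) ^ r)⁻¹ * (0 : (AlgebraicClosure (ZMod p))) ^ r = if r = 0 then 1 else 0 := by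
      by_cases hr0 : r = 0
      · simp [hr0]
      · simp [zero_pow hr0, hr0]
    have hsum : ∀ z : ZMod p, (((1 : (AlgebraicClosure (ZMod p))) - φ ↑α * φ z * φ z) ^ r)⁻¹ * φ z ^ r
        = φ (z ^ r * (((1 : ZMod p) - (α : ZMod p) * z * z) ^ r)⁻¹) := by
      intro z
      rw [_root_.map_mul, map_inv₀, map_pow, map_pow, map_sub, _root_.map_one, _root_.map_mul,
        _root_.map_mul, mul_comm]
    rw [hfirst, Finset.sum_congr rfl fun z _ => hsum z, ← map_sum] at ht2
    rw [← ht2]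
  set n := p - 1 - r with hn
  have hS := stmt19_sum_S p hodd r hre hr α hα
  have hrt : t = -((n.choose (n / 2) : (AlgebraicClosure (ZMod p))) * (-(φ ↑α)) ^ (n / 2)) := by
    have h1 : t * (-1 : (AlgebraicClosure (ZMod p))) ^ r = t := by rw [hre.neg_one_pow, mul_one]
    rw [h1] at ht'
    have h2 : (if r = 0 then (1 : (AlgebraicClosure (ZMod p))) else 0) = φ (if r = 0 then 1 else 0) := by
      split <;> simp
    rw [h2, ← map_add, hS] at ht'
    rw [ht', map_neg, _root_.map_mul, map_pow, map_natCast, map_neg]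
  rw [if_pos hre, hs', if_pos hre, hrt]
  have hhalf : r / 2 + n / 2 = (p - 1) / 2 := by
    obtain ⟨c, hc⟩ := hodd
    obtain ⟨m, hm⟩ := hre
    omega
  have hβ : (φ ↑α) ^ (r / 2) * (φ ↑α) ^ (n / 2) = -1 := by
    rw [← pow_add, hhalf, ← map_pow, stmt19_alpha_pow p hodd α hα, map_neg, _root_.map_one]
  rw [show (p - 1) / 2 = r / 2 + n / 2 from hhalf.symm, neg_pow (φ ↑α) (n / 2),
    pow_add (-1 : (AlgebraicClosure (ZMod p)))]
  linear_combination (-(r.choose (r / 2) : (AlgebraicClosure (ZMod p))) * (n.choose (n / 2) : (AlgebraicClosure (ZMod p))) * (-1 : (AlgebraicClosure (ZMod p))) ^ (r / 2)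
    * (-1 : (AlgebraicClosure (ZMod p))) ^ (n / 2)) * hβ
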